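/- arXiv:1802.10006 — 2 statements merged into one kernel-verified Lean document; each statement's English description precedes it below -/
import Mathlib

section
/- Let X and Y be finite T₀-spaces with Y connected and X non-empty, and let f : X → Y be a continuous map. Then f is a Hurewicz cofibration if and only if f is a homeomorphism onto its image f(X) and f(X) is a dbp–retract of Y. -/
open unitInterval

open Topology Filter

set_option autoImplicit false

universe u v

/-- The specialization preorder: `x ≤ y` iff every open set containing `y` contains `x`. -/
def specLE {X : Type*} [TopologicalSpace X] (x y : X) : Prop :=
  ∀ U : Set X, IsOpen U → y ∈ U → x ∈ U

/-- A continuous map `i : A → X` is a (Hurewicz) cofibration iff it has the homotopy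
extension property with respect to all topological spaces. -/
def IsCofibration {A : Type*} {X : Type*} [TopologicalSpace A] [TopologicalSpace X]
    (i : C(A, X)) : Prop :=
  ∀ (Z : Type v) [TopologicalSpace Z] (f : C(X, Z)) (H : C(A × I, Z)),
    (∀ a, H (a, 0) = f (i a)) →
    ∃ G : C(X × I, Z),
      (∀ x, G (x, 0) = f x) ∧ ∀ a t, G (i a, t) = H (a, t)

/-- `x` is a down beat point of the subspace `S`:
the set of points of `S` strictly below `x` has a maximum. -/
def IsDownBeatPoint {X : Type*} [TopologicalSpace X] (S : Set X) (x : X) : Prop :=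
  x ∈ S ∧ ∃ m ∈ S, m ≠ x ∧ specLE m x ∧
    ∀ z ∈ S, z ≠ x → specLE z x → specLE z m

/-- `T` is a dbp–retract of `S`: `T` is obtained from `S` by successively
removing down beat points. -/
inductive IsDbpRetract {X : Type*} [TopologicalSpace X] : Set X → Set X → Prop
  | refl (S : Set X) : IsDbpRetract S S
  | step {S T : Set X} (x : X) (hx : IsDownBeatPoint S x)
      (h : IsDbpRetract (S \ {x}) T) : IsDbpRetract S T

/-- The minimal open set containing `x` (in a finite space): the intersection of all
open sets containing `x`. -/
def minOpen {X : Type*} [TopologicalSpace X] (x : X) : Set X :=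
  ⋂₀ {U : Set X | IsOpen U ∧ x ∈ U}

section Basics

variable {α : Type*} [TopologicalSpace α]

lemma specLE_refl (x : α) : specLE x x := fun _ _ h => h

lemma specLE_trans {x y z : α} (h1 : specLE x y) (h2 : specLE y z) : specLE x z :=
  fun U hU hz => h1 U hU (h2 U hU hz)

lemma specLE_antisymm [T0Space α] {x y : α} (h1 : specLE x y) (h2 : specLE y x) : x = y :=
  (inseparable_iff_forall_isOpen.2 fun U hU =>
    ⟨fun hx => h2 U hU hx, fun hy => h1 U hU hy⟩).eq

lemma mem_minOpen_iff {x z : α} : z ∈ minOpen x ↔ specLE z x := by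
  simp only [minOpen, Set.mem_sInter, Set.mem_setOf_eq, and_imp, specLE]

lemma self_mem_minOpen (x : α) : x ∈ minOpen x := mem_minOpen_iff.2 (specLE_refl x)

lemma minOpen_subset {x : α} {U : Set α} (hU : IsOpen U) (hx : x ∈ U) : minOpen x ⊆ U :=
  Set.sInter_subset_of_mem ⟨hU, hx⟩

lemma isOpen_minOpen [Finite α] (x : α) : IsOpen (minOpen x) :=
  Set.Finite.isOpen_sInter (Set.toFinite _) (fun _ hU => hU.1)

lemma isOpen_of_downClosed [Finite α] {D : Set α}
    (h : ∀ y ∈ D, ∀ z, specLE z y → z ∈ D) : IsOpen D := by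
  have hD : D = ⋃ y ∈ D, minOpen y := by
    ext z
    constructor
    · intro hz; exact Set.mem_biUnion hz (self_mem_minOpen z)
    · intro hz
      obtain ⟨y, hy, hzy⟩ := Set.mem_iUnion₂.1 hz
      exact h y hy z (mem_minOpen_iff.1 hzy)
  rw [hD]
  exact isOpen_biUnion fun y _ => isOpen_minOpen y

lemma Continuous.specLE_map {β : Type*} [TopologicalSpace β] {g : α → β}
    (hg : Continuous g) {x y : α} (h : specLE x y) : specLE (g x) (g y) :=
  fun U hU hy => h _ (hU.preimage hg) hy

lemma continuous_of_specLE_mono [Finite α] {β : Type*} [TopologicalSpace β] {g : α → β}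
    (h : ∀ x y, specLE x y → specLE (g x) (g y)) : Continuous g := by
  rw [continuous_def]
  intro U hU
  exact isOpen_of_downClosed fun y hy z hz => h z y hz U hU hy

lemma specLE_prod_mk {β : Type*} [TopologicalSpace β] {a c : α} {b d : β}
    (h1 : specLE a c) (h2 : specLE b d) : specLE (a, b) (c, d) := by
  intro W hW hmem
  obtain ⟨U', V', hU, hV, hcU, hdV, hsub⟩ := isOpen_prod_iff.1 hW c d hmem
  exact hsub ⟨h1 _ hU hcU, h2 _ hV hdV⟩

lemma specLE_fst {β : Type*} [TopologicalSpace β] {p q : α × β}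
    (h : specLE p q) : specLE p.1 q.1 := by
  intro U hU hq
  exact (h (U ×ˢ Set.univ) (hU.prod isOpen_univ) ⟨hq, trivial⟩).1

lemma specLE_snd {β : Type*} [TopologicalSpace β] {p q : α × β}
    (h : specLE p q) : specLE p.2 q.2 := by
  intro U hU hq
  exact (h (Set.univ ×ˢ U) (isOpen_univ.prod hU) ⟨trivial, hq⟩).2

lemma specLE_eq_of_t1 [T1Space α] {s t : α} (h : specLE s t) : s = t := by
  by_contra hne
  exact hne (by simpa using h {s}ᶜ isOpen_compl_singleton (fun hs => hne (hs ▸ rfl)))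

lemma exists_specLE_minimal [Finite α] [T0Space α] {B : Set α} (hB : B.Nonempty) :
    ∃ x ∈ B, ∀ z ∈ B, specLE z x → z = x := by
  obtain ⟨x, hxB, hmin⟩ := Set.exists_min_image B (fun x => (minOpen x).ncard) (Set.toFinite B) hB
  refine ⟨x, hxB, fun z hz hzx => ?_⟩
  by_contra hne
  have hsub : minOpen z ⊂ minOpen x := by
    constructor
    · intro w hw
      exact mem_minOpen_iff.2 (specLE_trans (mem_minOpen_iff.1 hw) hzx)
    · intro hsup
      exact hne (specLE_antisymm hzx (mem_minOpen_iff.1 (hsup (self_mem_minOpen x))))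
  have h1 := Set.ncard_lt_ncard hsub (Set.toFinite _)
  have h2 := hmin z hz
  omega

end Basics

section Combinatorics

variable {Y : Type u} [TopologicalSpace Y]

lemma IsDbpRetract.subset {S T : Set Y} (h : IsDbpRetract S T) : T ⊆ S := by
  induction h with
  | refl S => exact subset_rfl
  | step x hx h ih => exact ih.trans Set.diff_subset

/-- From a dbp-retract chain, build a monotone retraction below the identity. -/
lemma IsDbpRetract.exists_retraction {S T : Set Y} (h : IsDbpRetract S T) :
    ∃ r : Y → Y, (∀ y ∈ S, r y ∈ T) ∧ (∀ y ∈ T, r y = y) ∧ (∀ y ∈ S, specLE (r y) y) ∧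
      (∀ y ∈ S, ∀ z ∈ S, specLE y z → specLE (r y) (r z)) := by
  classical
  induction h with
  | refl S =>
      exact ⟨id, fun y hy => hy, fun y _ => rfl, fun y _ => specLE_refl y,
        fun y _ z _ h => h⟩
  | step x hx h ih =>
      rename_i S T
      obtain ⟨r', h1, h2, h3, h4⟩ := ih
      obtain ⟨hxS, m, hmS, hmne, hmle, hmax⟩ := hx
      have hTsub : _ ≤ _ := h.subset
      set r1 : Y → Y := fun y => if y = x then m else y with hr1
      have hr1mem : ∀ y ∈ S, r1 y ∈ S \ {x} := fun y hy => by
        by_cases hyx : y = x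
        · simp only [hr1, if_pos hyx]; exact ⟨hmS, hmne⟩
        · simp only [hr1, if_neg hyx]; exact ⟨hy, hyx⟩
      have hr1le : ∀ y, specLE (r1 y) y := by
        intro y
        by_cases hyx : y = x
        · subst hyx; simp only [hr1, if_pos rfl]; exact hmle
        · simp only [hr1, if_neg hyx]; exact specLE_refl y
      have hr1mono : ∀ y ∈ S, ∀ z ∈ S, specLE y z → specLE (r1 y) (r1 z) := by
        intro y hy z hz hyz
        by_cases hyx : y = x <;> by_cases hzx : z = x
        · subst hyx; subst hzx; exact specLE_refl _
        · subst hyx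
          simp only [hr1, if_pos rfl, if_neg hzx]
          exact specLE_trans hmle hyz
        · subst hzx
          simp only [hr1, if_pos rfl, if_neg hyx]
          exact hmax y hy hyx hyz
        · simp only [hr1, if_neg hyx, if_neg hzx]; exact hyz
      refine ⟨fun y => r' (r1 y), ?_, ?_, ?_, ?_⟩
      · intro y hy; exact h1 _ (hr1mem y hy)
      · intro y hy
        have hyx : y ≠ x := (hTsub hy).2
        simp only [hr1, if_neg hyx]
        exact h2 y hy
      · intro y hy
        exact specLE_trans (h3 _ (hr1mem y hy)) (hr1le y)
      · intro y hy z hz hyz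
        exact h4 _ (hr1mem y hy) _ (hr1mem z hz) (hr1mono y hy z hz hyz)

variable [Finite Y] [T0Space Y]

/-- A monotone retraction below the identity yields a dbp-retract chain. -/
lemma dbpRetract_of_retraction (A : Set Y) (r : Y → Y) (hrA : ∀ a ∈ A, r a = a) :
    ∀ (n : ℕ) (S : Set Y), (S \ A).ncard = n → A ⊆ S →
      (∀ y ∈ S, r y ∈ A) → (∀ y ∈ S, specLE (r y) y) →
      (∀ y ∈ S, ∀ z ∈ S, specLE y z → specLE (r y) (r z)) →
      IsDbpRetract S A := by
  intro n
  induction n with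
  | zero =>
      intro S h0 hAS _ _ _
      have hSA : S \ A = ∅ := (Set.ncard_eq_zero (Set.toFinite _)).1 h0
      have : S = A := subset_antisymm (by rwa [Set.diff_eq_empty] at hSA) hAS
      rw [this]
      exact IsDbpRetract.refl A
  | succ n ih =>
      intro S hcard hAS hmaps hle hmono
      have hne : (S \ A).Nonempty := by
        rw [Set.nonempty_iff_ne_empty]
        intro h
        rw [h, Set.ncard_empty] at hcard
        omega
      obtain ⟨x, hxSA, hxmin⟩ := exists_specLE_minimal hne
      obtain ⟨hxS, hxA⟩ := hxSA
      have hrx : r x ∈ A := hmaps x hxS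
      have hrxne : r x ≠ x := fun h => hxA (h ▸ hrx)
      have hbeat : IsDownBeatPoint S x := by
        refine ⟨hxS, r x, hAS hrx, hrxne, hle x hxS, ?_⟩
        intro z hzS hzx hzle
        have hzA : z ∈ A := by
          by_contra hzA
          exact hzx (hxmin z ⟨hzS, hzA⟩ hzle)
        have := hmono z hzS x hxS hzle
        rwa [hrA z hzA] at this
      refine IsDbpRetract.step x hbeat (ih (S \ {x}) ?_ ?_ ?_ ?_ ?_)
      · have hE : (S \ {x}) \ A = (S \ A) \ {x} := by
          ext w; simp only [Set.mem_diff, Set.mem_singleton_iff]; tauto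
        rw [hE, Set.ncard_diff_singleton_of_mem (show x ∈ S \ A from ⟨hxS, hxA⟩), hcard]
        omega
      · intro a ha
        exact ⟨hAS ha, fun h => hxA (h ▸ ha)⟩
      · intro y hy; exact hmaps y hy.1
      · intro y hy; exact hle y hy.1
      · intro y hy z hz hyz; exact hmono y hy.1 z hz.1 hyz

end Combinatorics

section Transport

/-- The HEP applies to any small codomain, by transporting across `Shrink`. -/
lemma IsCofibration.hep_small {A B : Type u} [TopologicalSpace A] [TopologicalSpace B]
    {i : C(A, B)} (hcof : IsCofibration.{v} i) (Z : Type*) [TopologicalSpace Z]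
    [Small.{v} Z] (g : C(B, Z)) (H : C(A × I, Z)) (h0 : ∀ a, H (a, 0) = g (i a)) :
    ∃ G : C(B × I, Z), (∀ x, G (x, 0) = g x) ∧ ∀ a t, G (i a, t) = H (a, t) := by
  letI tS : TopologicalSpace (Shrink.{v} Z) :=
    TopologicalSpace.induced (fun z => (equivShrink Z).symm z) inferInstance
  have he : Topology.IsInducing (fun z : Shrink.{v} Z => (equivShrink Z).symm z) :=
    (Topology.isInducing_iff _).2 rfl
  let e : Shrink.{v} Z ≃ₜ Z := Equiv.toHomeomorphOfIsInducing (equivShrink Z).symm he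
  obtain ⟨G, hG0, hGf⟩ := hcof (Shrink.{v} Z)
    ((ContinuousMap.mk e.symm e.symm.continuous).comp g) ((ContinuousMap.mk e.symm e.symm.continuous).comp H)
    (by intro a; simp [h0 a])
  refine ⟨(ContinuousMap.mk e e.continuous).comp G, ?_, ?_⟩
  · intro x
    have := hG0 x
    simp only [ContinuousMap.comp_apply] at this ⊢
    rw [this]
    simp
  · intro a t
    have := hGf a t
    simp only [ContinuousMap.comp_apply] at this ⊢
    rw [this]
    simp

end Transport

/-- The non-Hausdorff mapping cylinder carrier. -/
inductive MCyl (X Y : Type u) : Type u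
  | inl : X → MCyl X Y
  | inr : Y → MCyl X Y

namespace MCyl

variable {X Y : Type u}

def equivSum : MCyl X Y ≃ X ⊕ Y where
  toFun := fun z => match z with
    | .inl x => Sum.inl x
    | .inr y => Sum.inr y
  invFun := Sum.elim MCyl.inl MCyl.inr
  left_inv := fun z => by cases z <;> rfl
  right_inv := fun z => by cases z <;> rfl

instance [Finite X] [Finite Y] : Finite (MCyl X Y) :=
  Finite.of_equiv _ equivSum.symm

/-- The mapping-cylinder topology on `X ⊕ Y` for `f : X → Y`. -/
def cylTop [TopologicalSpace X] [TopologicalSpace Y] (f : X → Y) :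
    TopologicalSpace (MCyl X Y) where
  IsOpen V := IsOpen (MCyl.inl ⁻¹' V) ∧ IsOpen (MCyl.inr ⁻¹' V) ∧
    ∀ x, MCyl.inl x ∈ V → MCyl.inr (f x) ∈ V
  isOpen_univ := ⟨isOpen_univ, isOpen_univ, fun _ _ => trivial⟩
  isOpen_inter := fun S T hS hT =>
    ⟨hS.1.inter hT.1, hS.2.1.inter hT.2.1, fun x hx => ⟨hS.2.2 x hx.1, hT.2.2 x hx.2⟩⟩
  isOpen_sUnion := by
    intro 𝒮 h
    refine ⟨?_, ?_, ?_⟩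
    · rw [Set.preimage_sUnion]
      exact isOpen_biUnion fun V hV => (h V hV).1
    · rw [Set.preimage_sUnion]
      exact isOpen_biUnion fun V hV => (h V hV).2.1
    · rintro x ⟨V, hV, hx⟩
      exact ⟨V, hV, (h V hV).2.2 x hx⟩

end MCyl

lemma I_zero_ne_one : (0 : I) ≠ 1 := by norm_num

section Embedding

variable {X Y : Type u} [TopologicalSpace X] [TopologicalSpace Y]

lemma embedding_of_cofibration [Finite X] [Finite Y] {f : C(X, Y)}
    (hcof : IsCofibration.{v} f) : Topology.IsEmbedding ⇑f := by
  classical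
  letI tZ : TopologicalSpace (MCyl X Y) := MCyl.cylTop ⇑f
  have hginr : Continuous (MCyl.inr : Y → MCyl X Y) := continuous_def.2 fun V hV => hV.2.1
  have hHcont : Continuous
      (fun p : X × I => if p.2 = 1 then (MCyl.inl p.1 : MCyl X Y) else MCyl.inr (f p.1)) := by
    rw [continuous_def]
    intro V hV
    rw [isOpen_prod_iff]
    intro x t hmem
    by_cases ht : t = 1
    · subst ht
      rw [Set.mem_preimage, if_pos rfl] at hmem
      refine ⟨minOpen x, Set.univ, isOpen_minOpen x, isOpen_univ, self_mem_minOpen x,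
        trivial, ?_⟩
      rintro ⟨x', t'⟩ ⟨hx', -⟩
      have hinl : MCyl.inl x' ∈ V := minOpen_subset hV.1 hmem hx'
      by_cases ht' : t' = 1
      · simpa [Set.mem_preimage, if_pos ht'] using hinl
      · simp only [Set.mem_preimage, if_neg ht']
        exact hV.2.2 x' hinl
    · rw [Set.mem_preimage, if_neg ht] at hmem
      refine ⟨⇑f ⁻¹' (MCyl.inr ⁻¹' V), {1}ᶜ, (hV.2.1).preimage f.continuous,
        isOpen_compl_singleton, hmem, ht, ?_⟩
      rintro ⟨x', t'⟩ ⟨hx', ht'⟩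
      simp only [Set.mem_preimage, if_neg (by simpa using ht' : t' ≠ 1)]
      exact hx'
  obtain ⟨G, hG0, hGf⟩ := hcof.hep_small (MCyl X Y) ⟨MCyl.inr, hginr⟩ ⟨_, hHcont⟩ (by
    intro a
    simp only [ContinuousMap.coe_mk, if_neg I_zero_ne_one])
  set r : Y → MCyl X Y := fun y => G (y, 1) with hr
  have hrcont : Continuous r := G.continuous.comp (continuous_id.prodMk continuous_const)
  have hrf : r ∘ ⇑f = (MCyl.inl : X → MCyl X Y) := by
    funext x
    have h := hGf x 1
    simp only [ContinuousMap.coe_mk, if_pos rfl] at h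
    simpa [hr] using h
  have hinl_emb : Topology.IsEmbedding (MCyl.inl : X → MCyl X Y) := by
    refine (Topology.isEmbedding_iff _).2 ⟨(Topology.isInducing_iff _).2 ?_,
      fun a b h => by injection h⟩
    rw [TopologicalSpace.ext_iff]
    intro U
    rw [isOpen_induced_iff]
    constructor
    · intro hU
      refine ⟨MCyl.inl '' U ∪ MCyl.inr '' (⋃ x ∈ U, minOpen (f x)), ⟨?_, ?_, ?_⟩, ?_⟩
      · have : (MCyl.inl ⁻¹' (MCyl.inl '' U ∪ MCyl.inr '' (⋃ x ∈ U, minOpen (f x))) : Set X)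
            = U := by
          ext w
          simp [MCyl.inl.injEq]
        rw [this]; exact hU
      · have : (MCyl.inr ⁻¹' (MCyl.inl '' U ∪ MCyl.inr '' (⋃ x ∈ U, minOpen (f x))) : Set Y)
            = ⋃ x ∈ U, minOpen (f x) := by
          ext w
          simp [MCyl.inr.injEq]
        rw [this]
        exact isOpen_biUnion fun x _ => isOpen_minOpen (f x)
      · intro x hx
        have hxU : x ∈ U := by
          rcases hx with ⟨x', hx', hh⟩ | ⟨y', _, hh⟩
          · cases hh; exact hx'
          · cases hh
        exact Or.inr ⟨f x, Set.mem_biUnion hxU (self_mem_minOpen (f x)), rfl⟩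
      · ext w
        simp [MCyl.inl.injEq]
    · rintro ⟨V, hV, rfl⟩
      exact hV.1
  have hcomp : Topology.IsEmbedding (r ∘ ⇑f) := hrf ▸ hinl_emb
  exact Topology.IsEmbedding.of_comp f.continuous hrcont hcomp

end Embedding

section RangeRetract

variable {X Y : Type u} [TopologicalSpace X] [TopologicalSpace Y]

lemma range_dbpRetract_of_cofibration [Finite X] [Finite Y] [T0Space Y] [ConnectedSpace Y]
    [Nonempty X] {f : C(X, Y)} (hcof : IsCofibration.{v} f) :
    IsDbpRetract (Set.univ : Set Y) (Set.range ⇑f) := by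
  classical
  set A : Set Y := Set.range ⇑f with hA
  -- the subspace Y × {0} ∪ A × I of Y × I, as a subtype
  set Z₂ := {p : Y × I // p.1 ∈ A ∨ p.2 = 0} with hZ₂
  haveI : Small.{v} Z₂ := by
    obtain ⟨n, ⟨eY⟩⟩ := Finite.exists_equiv_fin Y
    refine small_map (β := {q : Fin n × I // eY.symm q.1 ∈ A ∨ q.2 = 0})
      (Equiv.subtypeEquiv (eY.prodCongr (Equiv.refl I)) (fun p => ?_))
    simp
  have hg2 : Continuous (fun y : Y => (⟨(y, 0), Or.inr rfl⟩ : Z₂)) :=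
    Continuous.subtype_mk (continuous_id.prodMk continuous_const) _
  have hH2 : Continuous (fun p : X × I => (⟨(f p.1, p.2), Or.inl ⟨p.1, rfl⟩⟩ : Z₂)) :=
    Continuous.subtype_mk ((f.continuous.comp continuous_fst).prodMk continuous_snd) _
  obtain ⟨G, hG0, hGf⟩ := hcof.hep_small Z₂ ⟨_, hg2⟩ ⟨_, hH2⟩ (fun a => rfl)
  set R : Y × I → Y × I := fun p => (G p).val with hR
  have hRcont : Continuous R := continuous_subtype_val.comp G.continuous
  have hR0 : ∀ y, R (y, 0) = (y, 0) := fun y => congrArg Subtype.val (hG0 y)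
  have hRf : ∀ (x : X) (t : I), R (f x, t) = (f x, t) :=
    fun x t => congrArg Subtype.val (hGf x t)
  have hRmem : ∀ p, (R p).1 ∈ A ∨ (R p).2 = 0 := fun p => (G p).property
  -- Lemma F: monotonicity in the fibre and equality of heights
  have hF : ∀ (z y : Y) (t : I), specLE z y →
      specLE (R (z, t)).1 (R (y, t)).1 ∧ (R (z, t)).2 = (R (y, t)).2 := by
    intro z y t h
    have h2 : specLE (R (z, t)) (R (y, t)) :=
      hRcont.specLE_map (specLE_prod_mk h (specLE_refl t))
    exact ⟨specLE_fst h2, specLE_eq_of_t1 (specLE_snd h2)⟩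
  obtain ⟨x₀⟩ := ‹Nonempty X›
  -- all heights are equal to t, by connectedness
  have hht : ∀ (t : I) (y : Y), (R (y, t)).2 = t := by
    intro t
    set S := {y : Y | (R (y, t)).2 = t} with hS
    have hSopen : IsOpen S := isOpen_of_downClosed (by
      intro y hy z hz
      have := (hF z y t hz).2
      simp only [hS, Set.mem_setOf_eq] at hy ⊢
      rw [this, hy])
    have hScopen : IsOpen Sᶜ := isOpen_of_downClosed (by
      intro y hy z hz hzS
      apply hy
      have := (hF z y t hz).2
      simp only [hS, Set.mem_setOf_eq] at hzS ⊢
      rw [← this, hzS])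
    have hSne : f x₀ ∈ S := by
      simp only [hS, Set.mem_setOf_eq, hRf]
    have := (isClopen_iff.1 ⟨isOpen_compl_iff.1 hScopen, hSopen⟩).resolve_left
      (Set.nonempty_iff_ne_empty.1 ⟨f x₀, hSne⟩)
    intro y
    have hy : y ∈ S := this ▸ Set.mem_univ y
    exact hy
  -- eventually near t = 0, the retraction stays below the identity
  have hall : {s : I | ∀ y : Y, (R (y, s)).1 ∈ minOpen y} ∈ 𝓝 (0 : I) := by
    rw [Set.setOf_forall]
    refine Filter.iInter_mem.2 fun y => ?_
    have hcmap : Continuous (fun s : I => R (y, s)) :=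
      hRcont.comp ((continuous_const : Continuous fun _ : I => y).prodMk continuous_id)
    have hc : Filter.Tendsto (fun s : I => R (y, s)) (𝓝 0) (𝓝 ((y, 0) : Y × I)) := by
      have h1 := hcmap.tendsto (0 : I)
      simpa [hR0 y] using h1
    have hmem := hc (((isOpen_minOpen y).prod isOpen_univ).mem_nhds
      ⟨self_mem_minOpen y, trivial⟩)
    exact Filter.mem_of_superset hmem (fun s hs => hs.1)
  obtain ⟨ε, hε, hball⟩ := Metric.mem_nhds_iff.1 hall
  have ht0mem : min (ε / 2) (1 / 2) ∈ Set.Icc (0 : ℝ) 1 :=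
    ⟨le_min (half_pos hε).le (by norm_num), (min_le_right _ _).trans (by norm_num)⟩
  set t₀ : I := ⟨min (ε / 2) (1 / 2), ht0mem⟩ with ht₀def
  have ht₀pos : (0 : ℝ) < (t₀ : ℝ) := lt_min (half_pos hε) (by norm_num)
  have ht₀ne : t₀ ≠ 0 := fun h => by
    rw [ht₀def] at h
    have : (min (ε / 2) (1 / 2) : ℝ) = 0 := congrArg Subtype.val h
    linarith
  have ht₀ball : t₀ ∈ Metric.ball (0 : I) ε := by
    rw [Metric.mem_ball, Subtype.dist_eq, Real.dist_eq]
    have h0 : ((0 : I) : ℝ) = 0 := rfl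
    rw [h0, sub_zero, abs_of_nonneg ht₀pos.le]
    exact lt_of_le_of_lt (min_le_left _ _) (by linarith)
  have ht₀ : ∀ y, (R (y, t₀)).1 ∈ minOpen y := hball ht₀ball
  set r : Y → Y := fun y => (R (y, t₀)).1 with hrdef
  have hrA : ∀ y, r y ∈ A := fun y =>
    (hRmem (y, t₀)).resolve_right (by rw [hht]; exact ht₀ne)
  have hrfix : ∀ a ∈ A, r a = a := by
    rintro a ⟨x, rfl⟩
    simp only [hrdef]
    rw [hRf]
  have hrle : ∀ y, specLE (r y) y := fun y => mem_minOpen_iff.1 (ht₀ y)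
  have hrmono : ∀ y z, specLE y z → specLE (r y) (r z) := fun y z h => (hF y z t₀ h).1
  exact dbpRetract_of_retraction A r hrfix ((Set.univ \ A).ncard) Set.univ rfl
    (Set.subset_univ _) (fun y _ => hrA y) (fun y _ => hrle y)
    (fun y _ z _ h => hrmono y z h)

end RangeRetract

section Backward

variable {X Y : Type u} [TopologicalSpace X] [TopologicalSpace Y]

lemma cofibration_of_embedding_retract [Finite X] [Finite Y] [Nonempty X] {f : C(X, Y)}
    (hemb : Topology.IsEmbedding ⇑f)
    (hret : IsDbpRetract (Set.univ : Set Y) (Set.range ⇑f)) :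
    IsCofibration.{v} f := by
  classical
  obtain ⟨r, hrT, hrfix, hrle, hrmono⟩ := hret.exists_retraction
  set q : Y → X := fun y => Function.invFun ⇑f (r y) with hq
  have hfq : ∀ y, f (q y) = r y := fun y => Function.invFun_eq (hrT y (Set.mem_univ y))
  have hqmono : ∀ y z, specLE y z → specLE (q y) (q z) := by
    intro y z h
    have h2 : specLE (f (q y)) (f (q z)) := by
      rw [hfq, hfq]
      exact hrmono y trivial z trivial h
    intro U hU hmem
    obtain ⟨V, hV, hUV⟩ := (hemb.isInducing.isOpen_iff).1 hU
    rw [← hUV] at hmem ⊢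
    exact h2 V hV hmem
  have hqcont : Continuous q := continuous_of_specLE_mono hqmono
  have hrfixr : ∀ x : X, r (f x) = f x := fun x => hrfix _ ⟨x, rfl⟩
  have hqf : ∀ x, q (f x) = x := fun x => hemb.injective (by rw [hfq, hrfixr])
  intro Z _ g H hH0
  have hcont : Continuous (fun p : Y × I => if p.2 = 0 then g p.1 else H (q p.1, p.2)) := by
    rw [continuous_iff_continuousAt]
    rintro ⟨y, t⟩
    by_cases ht : t = 0
    · subst ht
      have key : ∀ W : Set Z, IsOpen W → g y ∈ W →
          {p : Y × I | (if p.2 = 0 then g p.1 else H (q p.1, p.2)) ∈ W}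
            ∈ 𝓝 ((y, 0) : Y × I) := by
        intro W hW hgW
        have hmy : ∀ z ∈ minOpen y, g z ∈ W := fun z hz =>
          minOpen_subset (hW.preimage g.continuous) hgW hz
        have hT : ∀ z : Y, {s : I | z ∈ minOpen y → H (q z, s) ∈ W} ∈ 𝓝 (0 : I) := by
          intro z
          by_cases hz : z ∈ minOpen y
          · have h0 : H (q z, 0) ∈ W := by
              rw [hH0, hfq]
              exact hmy _ (mem_minOpen_iff.2
                (specLE_trans (hrle z trivial) (mem_minOpen_iff.1 hz)))
            have hcH : Continuous (fun s : I => H (q z, s)) :=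
              H.continuous.comp
                ((continuous_const : Continuous fun _ : I => q z).prodMk continuous_id)
            have h1 := hcH.tendsto (0 : I) (hW.mem_nhds h0)
            exact Filter.mem_of_superset h1 (fun s hs _ => hs)
          · exact Filter.univ_mem' (fun s h => absurd h hz)
        have hprod : (minOpen y) ×ˢ (⋂ z, {s : I | z ∈ minOpen y → H (q z, s) ∈ W})
            ∈ 𝓝 ((y, 0) : Y × I) := by
          rw [nhds_prod_eq]
          exact Filter.prod_mem_prod ((isOpen_minOpen y).mem_nhds (self_mem_minOpen y))
            (Filter.iInter_mem.2 hT)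
        refine Filter.mem_of_superset hprod ?_
        rintro ⟨z, s⟩ ⟨hz, hs⟩
        simp only [Set.mem_setOf_eq]
        by_cases hs0 : s = 0
        · rw [if_pos hs0]; exact hmy z hz
        · rw [if_neg hs0]; exact (Set.mem_iInter.1 hs z) hz
      have htend : Filter.Tendsto (fun p : Y × I => if p.2 = 0 then g p.1 else H (q p.1, p.2))
          (𝓝 ((y, 0) : Y × I)) (𝓝 (g y)) := by
        rw [Filter.tendsto_def]
        intro W hW
        obtain ⟨O, hOW, hO, hgO⟩ := mem_nhds_iff.1 hW
        exact Filter.mem_of_superset (key O hO hgO) (fun p hp => hOW hp)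
      have hFv : (if ((y, 0) : Y × I).2 = 0 then g ((y, 0) : Y × I).1
          else H (q ((y, 0) : Y × I).1, ((y, 0) : Y × I).2)) = g y := if_pos rfl
      exact htend.mono_right (le_of_eq (congrArg 𝓝 hFv.symm))
    · have hKcont : Continuous (fun p : Y × I => H (q p.1, p.2)) :=
        H.continuous.comp ((hqcont.comp continuous_fst).prodMk continuous_snd)
      have hopen : IsOpen {p : Y × I | p.2 ≠ 0} :=
        isOpen_compl_iff.2 (isClosed_singleton.preimage continuous_snd)
      refine (hKcont.continuousAt).congr ?_
      have hmem : {p : Y × I | p.2 ≠ 0} ∈ 𝓝 ((y, t) : Y × I) := hopen.mem_nhds ht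
      filter_upwards [hmem] with p hp
      exact (if_neg hp).symm
  refine ⟨⟨fun p => if p.2 = 0 then g p.1 else H (q p.1, p.2), hcont⟩, ?_, ?_⟩
  · intro x
    exact if_pos rfl
  · intro a t
    simp only [ContinuousMap.coe_mk]
    by_cases ht : t = 0
    · subst ht
      rw [if_pos rfl, hH0]
    · rw [if_neg ht, hqf]

end Backward

/-- Let `X` and `Y` be finite T₀-spaces with `Y` connected and `X`
non-empty, and `f : X → Y` continuous. Then `f` is a Hurewicz cofibration iff `f` is a
homeomorphism onto its image (an embedding) and `f(X)` is a dbp–retract of `Y`. -/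
theorem cofibration_iff_embedding_and_range_dbpRetract
    {X : Type u} {Y : Type u} [TopologicalSpace X] [TopologicalSpace Y]
    [Finite X] [T0Space X] [Finite Y] [T0Space Y] [ConnectedSpace Y] [Nonempty X]
    (f : C(X, Y)) :
    IsCofibration f ↔
      Topology.IsEmbedding ⇑f ∧ IsDbpRetract (Set.univ : Set Y) (Set.range ⇑f) := by
  constructor
  · intro hcof
    exact ⟨embedding_of_cofibration hcof, range_dbpRetract_of_cofibration hcof⟩
  · rintro ⟨hemb, hret⟩
    exact cofibration_of_embedding_retract hemb hret
end

section
/- Let X be a finite topological space and let A be a subspace of X, with inclusion map i : A → X. Then i is a Hurewicz cofibration if and only if the induced map i₀ : A₀ → X₀ between the Kolmogorov quotients (T₀-quotients, identifying points with the same open neighborhoods) is a Hurewicz cofibration. -/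
open unitInterval

set_option autoImplicit false

universe u v

section Aux

open SeparationQuotient

private instance {Y : Type*} [TopologicalSpace Y] [Finite Y] :
    Finite (SeparationQuotient Y) :=
  inferInstanceAs (Finite (Quotient _))

/-- A pointwise section of the separation quotient map sends each point to an
inseparable point. -/
private lemma sec_insep {Y : Type*} [TopologicalSpace Y] {s : SeparationQuotient Y → Y}
    (hs : ∀ ξ, mk (s ξ) = ξ) (y : Y) : Inseparable y (s (mk y)) :=
  mk_eq_mk.mp (hs (mk y)).symm

/-- Any pointwise section of the separation quotient map is continuous. -/
private lemma sec_cont {Y : Type*} [TopologicalSpace Y] {s : SeparationQuotient Y → Y}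
    (hs : ∀ ξ, mk (s ξ) = ξ) : Continuous s := by
  rw [continuous_def]
  intro U hU
  rw [← isQuotientMap_mk.isOpen_preimage]
  have h2 : mk ⁻¹' (s ⁻¹' U) = U := by
    ext y
    exact ((sec_insep hs y).mem_open_iff hU).symm
  rwa [h2]

/-- The carrier of a small model of `Y × {0} ∪ B × I` (with the pushout topology);
it lives in `Type 0` so that it can be `ULift`ed into any universe. -/
structure Cyl {B : Type*} {Y : Type*} [TopologicalSpace B] [TopologicalSpace Y]
    [Finite Y] (j : C(B, Y)) : Type where
  pt : Fin (Nat.card Y) × I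

variable {B : Type*} {Y : Type*} [TopologicalSpace B] [TopologicalSpace Y] [Finite Y]

/-- The bottom inclusion `Y → Cyl j`. -/
noncomputable def cj1 (j : C(B, Y)) (y : Y) : Cyl j :=
  ⟨(Finite.equivFin Y y, 0)⟩

/-- The cylinder inclusion `B × I → Cyl j`. -/
noncomputable def cj2 (j : C(B, Y)) (p : B × I) : Cyl j :=
  ⟨(Finite.equivFin Y (j p.1), p.2)⟩

/-- The pushout (final) topology on `Cyl j`. -/
noncomputable instance cylTop (j : C(B, Y)) : TopologicalSpace (Cyl j) :=
  TopologicalSpace.coinduced (cj1 j) inferInstance ⊔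
    TopologicalSpace.coinduced (cj2 j) inferInstance

private lemma cont_cj1 (j : C(B, Y)) : Continuous (cj1 j) := by
  unfold cylTop
  exact continuous_iff_coinduced_le.mpr le_sup_left

private lemma cont_cj2 (j : C(B, Y)) : Continuous (cj2 j) := by
  unfold cylTop
  exact continuous_iff_coinduced_le.mpr le_sup_right

private lemma cont_from_cyl {Z : Type*} [TopologicalSpace Z] {j : C(B, Y)} {F : Cyl j → Z}
    (h1 : Continuous (F ∘ cj1 j)) (h2 : Continuous (F ∘ cj2 j)) : Continuous F := by
  unfold cylTop
  exact continuous_sup_dom.mpr ⟨continuous_coinduced_dom.mpr h1, continuous_coinduced_dom.mpr h2⟩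

private lemma mem_open_cyl1 {j : C(B, Y)} {V : Set (Cyl j)} (hV : IsOpen V) {y y' : Y}
    (hyy' : Inseparable y y') : cj1 j y ∈ V ↔ cj1 j y' ∈ V :=
  hyy'.mem_open_iff ((cont_cj1 j).isOpen_preimage V hV)

private lemma mem_open_cyl2 {j : C(B, Y)} {V : Set (Cyl j)} (hV : IsOpen V) {p p' : B × I}
    (hpp' : Inseparable p p') : cj2 j p ∈ V ↔ cj2 j p' ∈ V :=
  hpp'.mem_open_iff ((cont_cj2 j).isOpen_preimage V hV)

/-- The retraction characterization of the homotopy extension property: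
there is a retraction of `Y × I` onto the model of `Y × {0} ∪ B × I`. -/
def HasRetr (j : C(B, Y)) : Prop :=
  ∃ R : C(Y × I, Cyl j),
    (∀ y, R (y, 0) = cj1 j y) ∧ ∀ b t, R (j b, t) = cj2 j (b, t)

/-- For an injective map `j` between finite-ish spaces (only the codomain needs
to be finite), being a cofibration (in any universe) is equivalent to the
retraction condition. -/
private lemma isCofibration_iff_hasRetr {j : C(B, Y)} (hj : Function.Injective j) :
    IsCofibration.{v} j ↔ HasRetr j := by
  constructor
  · intro hc
    obtain ⟨G, hG0, hGA⟩ :=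
      hc (ULift.{v} (Cyl j))
        ⟨fun y => ⟨cj1 j y⟩, (Homeomorph.ulift.symm.continuous).comp (cont_cj1 j)⟩
        ⟨fun p => ⟨cj2 j p⟩, (Homeomorph.ulift.symm.continuous).comp (cont_cj2 j)⟩
        (fun b => by simp [cj1, cj2])
    refine ⟨⟨fun p => (G p).down, (Homeomorph.ulift.continuous).comp G.continuous⟩, ?_, ?_⟩
    · intro y
      have := congrArg ULift.down (hG0 y)
      exact this
    · intro b t
      have := congrArg ULift.down (hGA b t)
      exact this
  · rintro ⟨R, hR0, hRA⟩
    intro Z _ f H hH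
    classical
    set e := Finite.equivFin Y with he
    let F : Cyl j → Z := fun c =>
      if c.pt.2 = 0 then f (e.symm c.pt.1)
      else if hb : ∃ b, j b = e.symm c.pt.1 then H (hb.choose, c.pt.2)
      else f (e.symm c.pt.1)
    have hF1 : ∀ y, F (cj1 j y) = f y := by
      intro y
      simp [F, cj1, he]
    have hF2 : ∀ p : B × I, F (cj2 j p) = H p := by
      rintro ⟨b, t⟩
      by_cases ht : t = 0
      · subst ht
        simp [F, cj2, hH b, he]
      · have hb : ∃ b', j b' = e.symm (e (j b)) := ⟨b, by simp⟩
        have hbb : hb.choose = b := hj (by simpa using hb.choose_spec)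
        simp only [F, cj2, ht, if_false, dif_pos hb, hbb]
        exact dif_pos ⟨b, by simp [he]⟩
    have hFc : Continuous F := by
      apply cont_from_cyl
      · have : F ∘ cj1 j = f := funext hF1
        rw [this]; exact f.continuous
      · have : F ∘ cj2 j = H := funext hF2
        rw [this]; exact H.continuous
    refine ⟨⟨fun p => F (R p), hFc.comp R.continuous⟩, ?_, ?_⟩
    · intro x
      simp only [ContinuousMap.coe_mk, hR0 x, hF1]
    · intro b t
      simp only [ContinuousMap.coe_mk, hRA b t, hF2]

end Aux

section Transfer

open SeparationQuotient

variable {X : Type u} [TopologicalSpace X] [Finite X] (A : Set X)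

private lemma i0_injective (i₀ : C(SeparationQuotient A, SeparationQuotient X))
    (h : ∀ a : A, i₀ (SeparationQuotient.mk a) = SeparationQuotient.mk (a : X)) :
    Function.Injective i₀ := by
  intro α β hαβ
  obtain ⟨a, rfl⟩ := surjective_mk α
  obtain ⟨b, rfl⟩ := surjective_mk β
  rw [h a, h b] at hαβ
  rw [mk_eq_mk] at hαβ ⊢
  exact Topology.IsInducing.subtypeVal.inseparable_iff.mp hαβ

private lemma hasRetr_transfer (i₀ : C(SeparationQuotient A, SeparationQuotient X))
    (h : ∀ a : A, i₀ (SeparationQuotient.mk a) = SeparationQuotient.mk (a : X)) :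
    HasRetr (⟨Subtype.val, continuous_subtype_val⟩ : C(A, X)) ↔ HasRetr i₀ := by
  classical
  set j : C(A, X) := ⟨Subtype.val, continuous_subtype_val⟩ with hj
  have hi₀inj : Function.Injective i₀ := i0_injective A i₀ h
  -- a section of the quotient map of `A`
  set sA : SeparationQuotient A → A := Function.surjInv surjective_mk with hsAdef
  have hsA : ∀ α, mk (sA α) = α := fun α => Function.surjInv_eq surjective_mk α
  -- a compatible section of the quotient map of `X`
  set sX : SeparationQuotient X → X := fun ξ =>
    if hξ : ∃ α, i₀ α = ξ then (sA hξ.choose : X) else Function.surjInv surjective_mk ξ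
    with hsXdef
  have hsX : ∀ ξ, mk (sX ξ) = ξ := by
    intro ξ
    by_cases hξ : ∃ α, i₀ α = ξ
    · simp only [hsXdef, dif_pos hξ]
      rw [← h (sA hξ.choose), hsA, hξ.choose_spec]
    · simp only [hsXdef, dif_neg hξ]
      exact Function.surjInv_eq surjective_mk ξ
  have hsXA : ∀ α, sX (i₀ α) = (sA α : X) := by
    intro α
    have hξ : ∃ β, i₀ β = i₀ α := ⟨α, rfl⟩
    simp only [hsXdef, dif_pos hξ]
    rw [hi₀inj hξ.choose_spec]
  set eX := Finite.equivFin X with heX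
  set e₀ := Finite.equivFin (SeparationQuotient X) with he₀
  -- the two comparison maps between the cylinders
  set ψ : Cyl j → Cyl i₀ := fun c => ⟨(e₀ (mk (eX.symm c.pt.1)), c.pt.2)⟩ with hψdef
  have hψ1 : ∀ x : X, ψ (cj1 j x) = cj1 i₀ (mk x) := by
    intro x; simp [hψdef, cj1, heX, he₀]
  have hψ2 : ∀ (a : A) (t : I), ψ (cj2 j (a, t)) = cj2 i₀ (mk a, t) := by
    intro a t
    simp only [hψdef, cj2, heX, he₀, Equiv.symm_apply_apply]
    have : (j a : X) = (a : X) := rfl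
    rw [this, ← h a]
  have hψc : Continuous ψ := by
    apply cont_from_cyl
    · have : ψ ∘ cj1 j = (cj1 i₀) ∘ mk := funext fun x => hψ1 x
      rw [this]
      exact (cont_cj1 i₀).comp continuous_mk
    · have : ψ ∘ cj2 j = (cj2 i₀) ∘ (fun p : A × I => (mk p.1, p.2)) :=
        funext fun p => hψ2 p.1 p.2
      rw [this]
      exact (cont_cj2 i₀).comp ((continuous_mk.comp continuous_fst).prodMk continuous_snd)
  set φ : Cyl i₀ → Cyl j := fun c => ⟨(eX (sX (e₀.symm c.pt.1)), c.pt.2)⟩ with hφdef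
  have hφ1 : ∀ ξ, φ (cj1 i₀ ξ) = cj1 j (sX ξ) := by
    intro ξ; simp [hφdef, cj1, heX, he₀]
  have hφ2 : ∀ (α) (t : I), φ (cj2 i₀ (α, t)) = cj2 j (sA α, t) := by
    intro α t
    simp only [hφdef, cj2, heX, he₀, Equiv.symm_apply_apply]
    rw [hsXA α]
    rfl
  have hφc : Continuous φ := by
    apply cont_from_cyl
    · have : φ ∘ cj1 i₀ = (cj1 j) ∘ sX := funext fun ξ => hφ1 ξ
      rw [this]
      exact (cont_cj1 j).comp (sec_cont hsX)
    · have : φ ∘ cj2 i₀ = (cj2 j) ∘ (fun p : SeparationQuotient A × I => (sA p.1, p.2)) :=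
        funext fun p => hφ2 p.1 p.2
      rw [this]
      exact (cont_cj2 j).comp (((sec_cont hsA).comp continuous_fst).prodMk continuous_snd)
  constructor
  · rintro ⟨R, hR0, hRA⟩
    refine ⟨⟨fun p => ψ (R (sX p.1, p.2)),
      hψc.comp (R.continuous.comp (((sec_cont hsX).comp continuous_fst).prodMk
        continuous_snd))⟩, ?_, ?_⟩
    · intro ξ
      simp only [ContinuousMap.coe_mk]
      rw [hR0 (sX ξ), hψ1, hsX]
    · intro α t
      simp only [ContinuousMap.coe_mk]
      rw [hsXA α]
      have : ((sA α : X), t) = (j (sA α), t) := rfl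
      rw [this, hRA (sA α) t, hψ2, hsA]
  · rintro ⟨R₀, hR00, hR0A⟩
    -- the continuous comparison map
    set R' : X × I → Cyl j := fun p => φ (R₀ (mk p.1, p.2)) with hR'def
    have hR'c : Continuous R' :=
      hφc.comp (R₀.continuous.comp ((continuous_mk.comp continuous_fst).prodMk
        continuous_snd))
    -- the desired retraction, pointwise inseparable from `R'`
    set R : X × I → Cyl j := fun p =>
      if p.2 = 0 then cj1 j p.1
      else if hp : p.1 ∈ A then cj2 j (⟨p.1, hp⟩, p.2) else R' p with hRdef
    have key : ∀ (p : X × I) (V : Set (Cyl j)), IsOpen V → (R p ∈ V ↔ R' p ∈ V) := by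
      rintro ⟨x, t⟩ V hV
      by_cases ht : t = 0
      · subst ht
        have hR'v : R' (x, 0) = cj1 j (sX (mk x)) := by
          simp only [hR'def]
          rw [hR00 (mk x), hφ1]
        have hRv : R (x, 0) = cj1 j x := by simp [hRdef]
        rw [hRv, hR'v]
        exact mem_open_cyl1 hV (sec_insep hsX x)
      · by_cases hx : x ∈ A
        · have hmk : mk x = i₀ (mk (⟨x, hx⟩ : A)) := (h ⟨x, hx⟩).symm
          have hR'v : R' (x, t) = cj2 j (sA (mk (⟨x, hx⟩ : A)), t) := by
            simp only [hR'def]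
            rw [hmk, hR0A (mk (⟨x, hx⟩ : A)) t, hφ2]
          have hRv : R (x, t) = cj2 j ((⟨x, hx⟩ : A), t) := by
            simp [hRdef, ht, hx]
          rw [hRv, hR'v]
          exact mem_open_cyl2 hV ((sec_insep hsA ⟨x, hx⟩).prod (Inseparable.refl t))
        · have hRv : R (x, t) = R' (x, t) := by simp [hRdef, ht, hx]
          rw [hRv]
    have hRc : Continuous R := by
      rw [continuous_def]
      intro V hV
      have : R ⁻¹' V = R' ⁻¹' V := by
        ext p
        exact key p V hV
      rw [this]
      exact hR'c.isOpen_preimage V hV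
    refine ⟨⟨R, hRc⟩, ?_, ?_⟩
    · intro x
      simp [hRdef]
    · intro a t
      by_cases ht : t = 0
      · subst ht
        have : R (j a, 0) = cj1 j (j a) := by simp [hRdef]
        rw [ContinuousMap.coe_mk, this]
        simp [cj1, cj2]
      · have hja : (j a : X) ∈ A := a.property
        have : R (j a, t) = cj2 j ((⟨(j a : X), hja⟩ : A), t) := by
          simp [hRdef, ht, hja]
        rw [ContinuousMap.coe_mk, this]
        congr 1
      
end Transfer

/-- Let `X` be a finite topological space and `A` a subspace, with
inclusion `i : A ↪ X`. Then `i` is a Hurewicz cofibration iff the induced map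
`i₀ : A₀ → X₀` between the Kolmogorov quotients (the unique continuous map commuting
with the quotient maps) is a Hurewicz cofibration. -/
theorem cofibration_iff_kolmogorov_quotient_cofibration
    {X : Type u} [TopologicalSpace X] [Finite X] (A : Set X)
    (i₀ : C(SeparationQuotient A, SeparationQuotient X))
    (h : ∀ a : A, i₀ (SeparationQuotient.mk a) = SeparationQuotient.mk (a : X)) :
    IsCofibration (⟨Subtype.val, continuous_subtype_val⟩ : C(A, X)) ↔
      IsCofibration i₀ := by
  have hjinj : Function.Injective (⟨Subtype.val, continuous_subtype_val⟩ : C(A, X)) := by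
    intro a b hab
    exact Subtype.val_injective hab
  rw [isCofibration_iff_hasRetr hjinj, isCofibration_iff_hasRetr (i0_injective A i₀ h)]
  exact hasRetr_transfer A i₀ h
end
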